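/- (Theorem 2.1(b), abstract form.) If the pixel q lies inside the anomaly, i.e. μ(q \ D) = 0 (so q ⊆ D up to a μ-null set), then |Φ · G⁻¹ Φ| ≤ ∫_q ‖v_j(x)‖² dμ(x). -/

import Mathlib

open MeasureTheory Matrix RealInnerProductSpace

private lemma integrable_inner_aux {Ω E : Type*} [MeasurableSpace Ω] {μ : Measure Ω}
    [NormedAddCommGroup E] [InnerProductSpace ℝ E] {f g : Ω → E}
    (hf : MemLp f 2 μ) (hg : MemLp g 2 μ) :
    Integrable (fun x => ⟪f x, g x⟫) μ := by
  have h := L2.integrable_inner (𝕜 := ℝ) (hf.toLp f) (hg.toLp g)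
  refine h.congr ?_
  filter_upwards [hf.coeFn_toLp, hg.coeFn_toLp] with x h1 h2
  rw [h1, h2]

private lemma gram_psd {Ω E : Type*} [MeasurableSpace Ω] (μ : Measure Ω)
    [NormedAddCommGroup E] [InnerProductSpace ℝ E] {m : ℕ}
    (v : Fin m → Ω → E) (hv : ∀ k, MemLp (v k) 2 μ) (c : Fin m → ℝ) :
    0 ≤ c ⬝ᵥ (Matrix.of fun a b => ∫ x, ⟪v a x, v b x⟫ ∂μ).mulVec c := by
  have key : c ⬝ᵥ (Matrix.of fun a b => ∫ x, ⟪v a x, v b x⟫ ∂μ).mulVec c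
      = ∫ x, ⟪∑ k, c k • v k x, ∑ k, c k • v k x⟫ ∂μ := by
    have : ∀ x : Ω, ⟪∑ k, c k • v k x, ∑ k, c k • v k x⟫
        = ∑ a, ∑ b, c a * (c b * ⟪v a x, v b x⟫) := by
      intro x
      simp_rw [sum_inner, inner_sum, real_inner_smul_left, real_inner_smul_right]
    simp_rw [this]
    rw [integral_finset_sum _ fun a _ => ?_]
    · simp only [dotProduct, mulVec, Matrix.of_apply]
      refine Finset.sum_congr rfl fun a _ => ?_
      rw [integral_finset_sum _ fun b _ =>
        (((integrable_inner_aux (hv a) (hv b)).const_mul (c b)).const_mul (c a))]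
      rw [Finset.mul_sum]
      refine Finset.sum_congr rfl fun b _ => ?_
      rw [MeasureTheory.integral_const_mul, MeasureTheory.integral_const_mul]
      ring
    · exact integrable_finset_sum _ fun b _ =>
        (((integrable_inner_aux (hv a) (hv b)).const_mul (c b)).const_mul (c a))
  rw [key]
  exact integral_nonneg fun x => real_inner_self_nonneg

/-- Theorem 2.1(b), abstract form: if the pixel `q` lies inside the anomaly
(`μ (q \ D) = 0`), then `|Φ ⬝ G⁻¹ Φ| ≤ ∫_q ‖v_j‖² dμ`. -/
theorem stmt3 {Ω : Type*} [MeasurableSpace Ω] (μ : Measure Ω)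
    {E : Type*} [NormedAddCommGroup E] [InnerProductSpace ℝ E]
    {m : ℕ} (hm : 0 < m) (v : Fin m → Ω → E)
    (hv : ∀ k, MemLp (v k) 2 μ)
    (D : Set Ω) (hD : MeasurableSet D)
    (G : Matrix (Fin m) (Fin m) ℝ)
    (hGdef : ∀ j k, G j k = ∫ x in D, ⟪v j x, v k x⟫ ∂μ)
    (hGinv : IsUnit G.det)
    (q : Set Ω) (hq : MeasurableSet q)
    (hqD : μ (q \ D) = 0)
    (j : Fin m) (Φ : Fin m → ℝ)
    (hΦ : ∀ k, Φ k = ∫ x in q, ⟪v j x, v k x⟫ ∂μ) :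
    |Φ ⬝ᵥ G⁻¹.mulVec Φ| ≤ ∫ x in q, ‖v j x‖ ^ 2 ∂μ := by
  classical
  set A : Matrix (Fin m) (Fin m) ℝ :=
    Matrix.of fun a b => ∫ x in q, ⟪v a x, v b x⟫ ∂μ with hA
  set B : Matrix (Fin m) (Fin m) ℝ :=
    Matrix.of fun a b => ∫ x in D \ q, ⟪v a x, v b x⟫ ∂μ with hB
  -- A and B are positive semidefinite (Gram matrices)
  have hApsd : ∀ c : Fin m → ℝ, 0 ≤ c ⬝ᵥ A.mulVec c := fun c =>
    gram_psd (μ.restrict q) v (fun k => (hv k).restrict q) c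
  have hBpsd : ∀ c : Fin m → ℝ, 0 ≤ c ⬝ᵥ B.mulVec c := fun c =>
    gram_psd (μ.restrict (D \ q)) v (fun k => (hv k).restrict (D \ q)) c
  -- A is symmetric
  have hAsymm : ∀ a b, A a b = A b a := by
    intro a b
    simp only [hA, Matrix.of_apply]
    simp_rw [real_inner_comm]
  -- q =ᵐ D ∩ q
  have hqae : q =ᵐ[μ] (D ∩ q : Set Ω) := by
    rw [MeasureTheory.ae_eq_set]
    constructor
    · refine measure_mono_null (fun x hx => ?_) hqD
      exact ⟨hx.1, fun hxD => hx.2 ⟨hxD, hx.1⟩⟩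
    · exact measure_mono_null (fun x hx => (hx.2 hx.1.2).elim) measure_empty
  -- G = A + B
  have hGAB : G = A + B := by
    ext a b
    have hint : IntegrableOn (fun x => ⟪v a x, v b x⟫) D μ :=
      integrable_inner_aux ((hv a).restrict D) ((hv b).restrict D)
    have hsplit := integral_inter_add_diff (μ := μ) (s := D) (t := q)
      (f := fun x => ⟪v a x, v b x⟫) hq hint
    have hAq : A a b = ∫ x in D ∩ q, ⟪v a x, v b x⟫ ∂μ := by
      simp only [hA, Matrix.of_apply]
      exact setIntegral_congr_set hqae
    simp only [Matrix.add_apply, hGdef, hB, Matrix.of_apply, hAq]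
    rw [← hsplit]
  -- Φ is the j-th row of A
  have hΦA : Φ = fun k => A j k := by
    funext k; simp [hΦ, hA]
  set y : Fin m → ℝ := G⁻¹.mulVec Φ with hy
  have hGy : G.mulVec y = Φ := by
    rw [hy, Matrix.mulVec_mulVec, Matrix.mul_nonsing_inv _ hGinv, Matrix.one_mulVec]
  set t : ℝ := Φ ⬝ᵥ y with ht
  have hyGy : y ⬝ᵥ G.mulVec y = t := by
    rw [hGy, ht, dotProduct_comm]
  have hyAy_le : y ⬝ᵥ A.mulVec y ≤ t := by
    have : y ⬝ᵥ G.mulVec y = y ⬝ᵥ A.mulVec y + y ⬝ᵥ B.mulVec y := by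
      rw [hGAB, Matrix.add_mulVec, dotProduct_add]
    nlinarith [hBpsd y, hyGy]
  have hyAy_nonneg : 0 ≤ y ⬝ᵥ A.mulVec y := hApsd y
  have ht_nonneg : 0 ≤ t := le_trans hyAy_nonneg hyAy_le
  have htAy : t = (A.mulVec y) j := by
    rw [ht, hΦA]
    simp [dotProduct, Matrix.mulVec]
  -- Cauchy-Schwarz for A
  have hquad : ∀ s : ℝ, 0 ≤ (A j j) * (s * s) + (2 * (A.mulVec y) j) * s
      + (y ⬝ᵥ A.mulVec y) := by
    intro s
    have h0 := hApsd (y + s • (Pi.single j 1 : Fin m → ℝ))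
    have e1 : A.mulVec (Pi.single j 1) = fun k => A k j := by
      funext k
      simp [Matrix.mulVec, dotProduct_single]
    have e2 : y ⬝ᵥ (fun k => A k j) = (A.mulVec y) j := by
      simp only [Matrix.mulVec, dotProduct]
      exact Finset.sum_congr rfl fun k _ => by rw [hAsymm k j]; ring
    have e3 : Pi.single j (1:ℝ) ⬝ᵥ A.mulVec y = (A.mulVec y) j := by
      rw [single_dotProduct, one_mul]
    have e4 : Pi.single j (1:ℝ) ⬝ᵥ (fun k => A k j) = A j j := by
      rw [single_dotProduct, one_mul]
    rw [Matrix.mulVec_add, Matrix.mulVec_smul, dotProduct_add, add_dotProduct,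
      add_dotProduct, smul_dotProduct, dotProduct_smul, smul_dotProduct, e1, e2, e3, dotProduct_smul, e4]
      at h0
    simp only [smul_eq_mul] at h0
    nlinarith [h0]
  have hdisc := discrim_le_zero hquad
  rw [discrim] at hdisc
  have hCS : ((A.mulVec y) j) ^ 2 ≤ A j j * (y ⬝ᵥ A.mulVec y) := by nlinarith
  have hAjj_eq : A j j = ∫ x in q, ‖v j x‖ ^ 2 ∂μ := by
    simp only [hA, Matrix.of_apply]
    refine integral_congr_ae (Filter.Eventually.of_forall fun x => ?_)
    exact real_inner_self_eq_norm_sq _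
  have hAjj_nonneg : 0 ≤ A j j := by
    have := hApsd (Pi.single j 1)
    have e1 : A.mulVec (Pi.single j 1) = fun k => A k j := by
      funext k; simp [Matrix.mulVec, dotProduct_single]
    rw [e1, single_dotProduct, one_mul] at this
    exact this
  rw [abs_of_nonneg ht_nonneg, ← hAjj_eq]
  nlinarith [hCS, hyAy_le, hyAy_nonneg, htAy, hAjj_nonneg, ht_nonneg,
    mul_le_mul_of_nonneg_left hyAy_le hAjj_nonneg]
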